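/- For every real number D with 0 < D < 1, the value ζ(D) of the Riemann zeta function is real and strictly negative: Im(ζ(D)) = 0 and Re(ζ(D)) < 0. -/

import Mathlib

open Complex Set

noncomputable def etaTerm (k : ℕ) (s : ℂ) : ℂ :=
    ((2 * (k : ℝ) + 1 : ℝ) : ℂ) ^ (-s) - ((2 * (k : ℝ) + 2 : ℝ) : ℂ) ^ (-s)

lemma etaTerm_eq_integral (k : ℕ) {s : ℂ} (hs : 0 < s.re) :
    etaTerm k s = ∫ t in (2 * (k : ℝ) + 1)..(2 * (k : ℝ) + 2), s * (t : ℂ) ^ (-s - 1) := by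
  have hk : (0:ℝ) ≤ (k:ℝ) := Nat.cast_nonneg k
  have hs0 : s ≠ 0 := fun h => by simp [h] at hs
  have hab : (2 * (k : ℝ) + 1) ≤ 2 * (k : ℝ) + 2 := by linarith
  have key : ∀ t ∈ Set.uIcc (2 * (k:ℝ) + 1) (2 * (k:ℝ) + 2),
      HasDerivAt (fun y : ℝ => -((y:ℂ) ^ (-s))) (s * (t:ℂ) ^ (-s - 1)) t := by
    intro t ht
    rw [Set.uIcc_of_le hab] at ht
    have htpos : 0 < t := by have := ht.1; linarith
    have hr : -s - 1 ≠ -1 := by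
      intro h
      apply hs0
      have : -s = 0 := by linear_combination h
      linear_combination -this
    have h1 := (hasDerivAt_ofReal_cpow_const' htpos.ne' hr).const_mul s
    have hfun : (fun y : ℝ => s * ((y:ℂ) ^ (-s - 1 + 1) / (-s - 1 + 1)))
        = fun y : ℝ => -((y:ℂ) ^ (-s)) := by
      funext y
      have h2 : -s - 1 + 1 = -s := by ring
      rw [h2, div_neg, mul_neg, neg_inj, div_eq_mul_inv, mul_comm ((y:ℂ) ^ (-s)),
        ← mul_assoc, mul_inv_cancel₀ hs0, one_mul]
    rwa [hfun] at h1
  have hcont : ContinuousOn (fun t : ℝ => s * (t : ℂ) ^ (-s - 1))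
      (Set.uIcc (2 * (k:ℝ) + 1) (2 * (k:ℝ) + 2)) := by
    intro t ht
    rw [Set.uIcc_of_le hab] at ht
    have htpos : 0 < t := by have := ht.1; linarith
    refine (ContinuousAt.continuousWithinAt ?_).const_smul s |>.congr (fun _ _ => rfl) rfl
    exact (continuousAt_cpow_const (ofReal_mem_slitPlane.2 htpos)).comp
      Complex.continuous_ofReal.continuousAt
  rw [intervalIntegral.integral_eq_sub_of_hasDerivAt key (hcont.intervalIntegrable)]
  rw [etaTerm]
  push_cast
  ring

lemma etaTerm_norm_le (k : ℕ) {s : ℂ} (hs : 0 < s.re) :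
    ‖etaTerm k s‖ ≤ ‖s‖ * (2 * (k : ℝ) + 1) ^ (-s.re - 1) := by
  have hk : (0:ℝ) ≤ (k:ℝ) := Nat.cast_nonneg k
  have ha : (0:ℝ) < 2 * (k : ℝ) + 1 := by linarith
  rw [etaTerm_eq_integral k hs]
  have := intervalIntegral.norm_integral_le_of_norm_le_const
    (C := ‖s‖ * (2 * (k : ℝ) + 1) ^ (-s.re - 1))
    (f := fun t : ℝ => s * (t : ℂ) ^ (-s - 1))
    (a := 2 * (k : ℝ) + 1) (b := 2 * (k : ℝ) + 2) ?_
  · calc _ ≤ ‖s‖ * (2 * (k : ℝ) + 1) ^ (-s.re - 1) * |2 * (k:ℝ) + 2 - (2 * (k:ℝ) + 1)| := this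
    _ = ‖s‖ * (2 * (k : ℝ) + 1) ^ (-s.re - 1) := by
        rw [show (2 * (k:ℝ) + 2 - (2 * (k:ℝ) + 1)) = 1 by ring, abs_one, mul_one]
  · intro t ht
    rw [Set.uIoc_of_le (by linarith)] at ht
    have htpos : 0 < t := by have := ht.1; linarith
    rw [norm_mul,
      Complex.norm_cpow_eq_rpow_re_of_pos htpos]
    have h1 : ((-s - 1).re) = -s.re - 1 := by simp
    rw [h1]
    refine mul_le_mul_of_nonneg_left ?_ (norm_nonneg s)
    exact Real.rpow_le_rpow_of_nonpos ha ht.1.le (by linarith)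

lemma summable_aux {c : ℝ} (hc : 0 < c) :
    Summable (fun k : ℕ => (2 * (k : ℝ) + 1) ^ (-c - 1)) := by
  have h1 : Summable (fun k : ℕ => ((k : ℝ) + 1) ^ (-c - 1)) := by
    have := (Real.summable_nat_rpow (p := -c - 1)).2 (by linarith)
    have h2 := (summable_nat_add_iff (f := fun n : ℕ => (n : ℝ) ^ (-c - 1)) 1).2 this
    refine h2.congr fun k => ?_
    push_cast
    ring_nf
  refine h1.of_nonneg_of_le (fun k => Real.rpow_nonneg (by positivity) _) fun k => ?_
  refine Real.rpow_le_rpow_of_nonpos (by positivity) (by linarith) (by linarith)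

noncomputable def etaF (s : ℂ) : ℂ := ∑' k, etaTerm k s

lemma summable_etaTerm {s : ℂ} (hs : 0 < s.re) : Summable (fun k => etaTerm k s) := by
  refine Summable.of_norm (((summable_aux hs).mul_left ‖s‖).of_nonneg_of_le
    (fun k => norm_nonneg _) fun k => etaTerm_norm_le k hs)

lemma etaTerm_differentiable (k : ℕ) : Differentiable ℂ (etaTerm k) := by
  have h1 : ((2 * (k : ℝ) + 1 : ℝ) : ℂ) ≠ 0 := by
    rw [Complex.ofReal_ne_zero]; positivity
  have h2 : ((2 * (k : ℝ) + 2 : ℝ) : ℂ) ≠ 0 := by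
    rw [Complex.ofReal_ne_zero]; positivity
  exact ((differentiable_id.neg).const_cpow (Or.inl h1)).sub
    ((differentiable_id.neg).const_cpow (Or.inl h2))

lemma etaF_differentiableAt {z : ℂ} (hz : 0 < z.re) : DifferentiableAt ℂ etaF z := by
  set σ : ℝ := z.re / 2 with hσ
  have hσ0 : 0 < σ := by positivity
  set R : ℝ := ‖z‖ + 1 with hR
  set U : Set ℂ := {s | σ < s.re} ∩ Metric.ball 0 R with hU
  have hUopen : IsOpen U :=
    (isOpen_lt continuous_const Complex.continuous_re).inter Metric.isOpen_ball
  have hzU : z ∈ U := by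
    constructor
    · simp only [Set.mem_setOf_eq, hσ]; linarith
    · simp [hR]
  have hdiff : DifferentiableOn ℂ (fun s => ∑' k, etaTerm k s) U := by
    refine differentiableOn_tsum_of_summable_norm
      (u := fun k : ℕ => R * (2 * (k : ℝ) + 1) ^ (-σ - 1))
      ((summable_aux hσ0).mul_left R)
      (fun k => (etaTerm_differentiable k).differentiableOn) hUopen ?_
    intro k w hw
    have hw1 : σ < w.re := hw.1
    have hw2 : ‖w‖ < R := by simpa [Metric.mem_ball] using hw.2
    have hwre : 0 < w.re := lt_trans hσ0 hw1
    refine (etaTerm_norm_le k hwre).trans ?_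
    have hbase : (1:ℝ) ≤ 2 * (k : ℝ) + 1 := by
      have : (0:ℝ) ≤ (k:ℝ) := Nat.cast_nonneg k; linarith
    refine mul_le_mul hw2.le
      (Real.rpow_le_rpow_of_exponent_le hbase (by linarith))
      (Real.rpow_nonneg (by positivity) _) (by positivity)
  exact (hdiff.differentiableAt (hUopen.mem_nhds hzU))

lemma eta_identity_of_one_lt {s : ℂ} (hs : 1 < s.re) :
    (1 - (2:ℂ) ^ ((1:ℂ) - s)) * riemannZeta s = etaF s := by
  have hs0 : s ≠ 0 := fun h => by rw [h] at hs; norm_num at hs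
  set f : ℕ → ℂ := fun n => 1 / (n : ℂ) ^ s with hf
  have hfsum : Summable f := (Complex.summable_one_div_nat_cpow).2 hs
  have hzeta : riemannZeta s = ∑' n, f n := zeta_eq_tsum_one_div_nat_cpow hs
  have hf0 : f 0 = 0 := by simp [hf, Complex.zero_cpow hs0]
  have heven : Summable fun k => f (2 * k) :=
    hfsum.comp_injective fun a b h => by omega
  have hodd : Summable fun k => f (2 * k + 1) :=
    hfsum.comp_injective fun a b h => by omega
  have heven' : Summable fun k => f (2 * k + 2) :=
    hfsum.comp_injective fun a b h => by omega
  have hsplit : (∑' k, f (2 * k)) + ∑' k, f (2 * k + 1) = ∑' n, f n :=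
    tsum_even_add_odd heven hodd
  have hE0 : (∑' k, f (2 * k)) = ∑' k, f (2 * k + 2) := by
    rw [Summable.tsum_eq_zero_add heven]
    simp only [mul_zero, hf0, zero_add]
    exact tsum_congr fun k => by rw [show 2 * (k + 1) = 2 * k + 2 by ring]
  have hkey : ∀ n : ℕ, f (2 * (n + 1)) = (2:ℂ) ^ (-s) * f (n + 1) := by
    intro n
    have hc := Complex.natCast_mul_natCast_cpow 2 (n + 1) s
    push_cast at hc
    simp only [hf]
    push_cast
    rw [hc, Complex.cpow_neg, one_div, mul_inv, one_div]
  have hEval : (∑' k, f (2 * k + 2)) = (2:ℂ) ^ (-s) * riemannZeta s := by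
    have h1 : (∑' k, f (2 * k + 2)) = ∑' k, (2:ℂ) ^ (-s) * f (k + 1) := by
      congr 1
      funext k
      have := hkey k
      rw [show 2 * k + 2 = 2 * (k + 1) by ring]
      exact this
    rw [h1, tsum_mul_left]
    congr 1
    have h2 := Summable.tsum_eq_zero_add hfsum
    rw [hzeta, h2, hf0, zero_add]
  have hF : etaF s = (∑' k, f (2 * k + 1)) - ∑' k, f (2 * k + 2) := by
    rw [etaF, ← Summable.tsum_sub hodd heven']
    refine tsum_congr fun k => ?_
    simp only [etaTerm, hf, Complex.cpow_neg, one_div]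
    push_cast
    ring_nf
  have h2s : (2:ℂ) ^ ((1:ℂ) - s) = 2 * (2:ℂ) ^ (-s) := by
    rw [show (1:ℂ) - s = 1 + (-s) by ring, Complex.cpow_add _ _ (two_ne_zero), Complex.cpow_one]
  rw [hF, h2s]
  have hO : (∑' k, f (2 * k + 1)) = riemannZeta s - (2:ℂ) ^ (-s) * riemannZeta s := by
    rw [← hEval, ← hE0, eq_sub_iff_add_eq, add_comm, hsplit, hzeta]
  rw [hO, hEval]
  ring

lemma preconnected_U : IsPreconnected {s : ℂ | 0 < s.re ∧ s ≠ 1} := by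
  have hA : Convex ℝ {s : ℂ | 0 < s.re ∧ s.re < 1} :=
    (convex_halfSpace_re_gt 0).inter (convex_halfSpace_re_lt 1)
  have hB : Convex ℝ {s : ℂ | 0 < s.re ∧ 0 < s.im} :=
    (convex_halfSpace_re_gt 0).inter (convex_halfSpace_im_gt 0)
  have hB' : Convex ℝ {s : ℂ | 0 < s.re ∧ s.im < 0} :=
    (convex_halfSpace_re_gt 0).inter (convex_halfSpace_im_lt 0)
  have hC : Convex ℝ {s : ℂ | 1 < s.re} := convex_halfSpace_re_gt 1
  have h1 : IsPreconnected ({s : ℂ | 0 < s.re ∧ s.re < 1} ∪ {s : ℂ | 0 < s.re ∧ 0 < s.im}) := by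
    refine IsPreconnected.union (Complex.mk (1/2) (1/2)) ?_ ?_
      hA.isPreconnected hB.isPreconnected <;> constructor <;> norm_num
  have h2 : IsPreconnected (({s : ℂ | 0 < s.re ∧ s.re < 1} ∪ {s : ℂ | 0 < s.re ∧ 0 < s.im})
      ∪ {s : ℂ | 0 < s.re ∧ s.im < 0}) := by
    refine IsPreconnected.union (Complex.mk (1/2) (-1/2)) ?_ ?_ h1 hB'.isPreconnected
    · left; constructor <;> norm_num
    · constructor <;> norm_num
  have h3 : IsPreconnected ((({s : ℂ | 0 < s.re ∧ s.re < 1} ∪ {s : ℂ | 0 < s.re ∧ 0 < s.im})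
      ∪ {s : ℂ | 0 < s.re ∧ s.im < 0}) ∪ {s : ℂ | 1 < s.re}) := by
    refine IsPreconnected.union (Complex.mk 2 1) ?_ ?_ h2 hC.isPreconnected
    · left; right; constructor <;> norm_num
    · norm_num
  have hset : {s : ℂ | 0 < s.re ∧ s ≠ 1} =
      (({s : ℂ | 0 < s.re ∧ s.re < 1} ∪ {s : ℂ | 0 < s.re ∧ 0 < s.im})
      ∪ {s : ℂ | 0 < s.re ∧ s.im < 0}) ∪ {s : ℂ | 1 < s.re} := by
    ext z
    simp only [Set.mem_setOf_eq, Set.mem_union]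
    constructor
    · rintro ⟨hre, hne⟩
      rcases lt_trichotomy z.im 0 with him | him | him
      · exact Or.inl (Or.inr ⟨hre, him⟩)
      · rcases lt_trichotomy z.re 1 with h | h | h
        · exact Or.inl (Or.inl (Or.inl ⟨hre, h⟩))
        · exact absurd (Complex.ext h him) hne
        · exact Or.inr h
      · exact Or.inl (Or.inl (Or.inr ⟨hre, him⟩))
    · rintro ((( ⟨h1, h2⟩ | ⟨h1, h2⟩) | ⟨h1, h2⟩) | h)
      · exact ⟨h1, fun he => by rw [he] at h2; norm_num at h2⟩
      · exact ⟨h1, fun he => by rw [he] at h2; norm_num at h2⟩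
      · exact ⟨h1, fun he => by rw [he] at h2; norm_num at h2⟩
      · refine ⟨by linarith, fun he => by rw [he] at h; norm_num at h⟩
  rw [hset]
  exact h3

lemma eta_identity {s : ℂ} (hs : 0 < s.re) (hs1 : s ≠ 1) :
    (1 - (2:ℂ) ^ ((1:ℂ) - s)) * riemannZeta s = etaF s := by
  set U : Set ℂ := {s : ℂ | 0 < s.re ∧ s ≠ 1} with hU
  have hUopen : IsOpen U := by
    have : U = {s : ℂ | 0 < s.re} ∩ {(1:ℂ)}ᶜ := by
      ext z; simp [hU, Set.mem_setOf_eq, and_comm]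
    rw [this]
    exact (isOpen_lt continuous_const Complex.continuous_re).inter isOpen_compl_singleton
  have hG : AnalyticOnNhd ℂ (fun s => (1 - (2:ℂ) ^ ((1:ℂ) - s)) * riemannZeta s) U := by
    refine DifferentiableOn.analyticOnNhd (fun z hz => ?_) hUopen
    refine DifferentiableAt.differentiableWithinAt ?_
    refine DifferentiableAt.mul ?_ (differentiableAt_riemannZeta hz.2)
    exact ((differentiableAt_const _).sub
      ((differentiableAt_const _).sub differentiableAt_id |>.const_cpow (Or.inl two_ne_zero)))
  have hF : AnalyticOnNhd ℂ etaF U :=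
    DifferentiableOn.analyticOnNhd
      (fun z hz => (etaF_differentiableAt hz.1).differentiableWithinAt) hUopen
  have h2U : (2:ℂ) ∈ U := by
    constructor
    · norm_num
    · intro h
      have := congrArg Complex.re h
      norm_num at this
  have hev : (fun s => (1 - (2:ℂ) ^ ((1:ℂ) - s)) * riemannZeta s) =ᶠ[nhds (2:ℂ)] etaF := by
    have hopen1 : IsOpen {z : ℂ | 1 < z.re} := isOpen_lt continuous_const Complex.continuous_re
    refine Filter.eventuallyEq_of_mem (hopen1.mem_nhds ?_) fun z hz => eta_identity_of_one_lt hz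
    show (1:ℝ) < (2:ℂ).re
    norm_num
  exact hG.eqOn_of_preconnected_of_eventuallyEq hF preconnected_U h2U hev ⟨hs, hs1⟩

/-- For every real `D` in the critical interval `(0, 1)`, the value `ζ(D)` of the
(meromorphically continued) Riemann zeta function is real and strictly negative. -/
theorem riemannZeta_real_neg_on_critical_interval (D : ℝ) (hD0 : 0 < D) (hD1 : D < 1) :
    (riemannZeta (D : ℂ)).im = 0 ∧ (riemannZeta (D : ℂ)).re < 0 := by
  have hDre : ((D:ℂ)).re = D := Complex.ofReal_re D
  have hD0' : 0 < ((D:ℂ)).re := by rwa [hDre]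
  have hD1' : (D:ℂ) ≠ 1 := by
    intro h
    have := congrArg Complex.re h
    rw [hDre, Complex.one_re] at this
    linarith
  have hid := eta_identity hD0' hD1'
  set T : ℝ := ∑' k : ℕ, ((2*(k:ℝ)+1) ^ (-D) - (2*(k:ℝ)+2) ^ (-D)) with hT
  have hterm : ∀ k : ℕ, etaTerm k (D:ℂ) =
      (((2*(k:ℝ)+1) ^ (-D) - (2*(k:ℝ)+2) ^ (-D) : ℝ) : ℂ) := by
    intro k
    have hk : (0:ℝ) ≤ (k:ℝ) := Nat.cast_nonneg k
    rw [etaTerm, show -((D:ℂ)) = ((-D : ℝ) : ℂ) by push_cast; ring,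
      ← Complex.ofReal_cpow (by linarith) (-D), ← Complex.ofReal_cpow (by linarith) (-D),
      ← Complex.ofReal_sub]
  have hFD : etaF (D:ℂ) = (T : ℂ) := by
    rw [etaF, hT, Complex.ofReal_tsum]
    exact tsum_congr hterm
  have hsumR : Summable (fun k : ℕ => (2*(k:ℝ)+1) ^ (-D) - (2*(k:ℝ)+2) ^ (-D)) := by
    refine ((summable_aux hD0).mul_left ‖(D:ℂ)‖).of_nonneg_of_le (fun k => ?_) (fun k => ?_)
    · have hk : (0:ℝ) ≤ (k:ℝ) := Nat.cast_nonneg k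
      have := Real.rpow_le_rpow_of_nonpos (x := 2*(k:ℝ)+1) (y := 2*(k:ℝ)+2) (by linarith)
        (by linarith) (z := -D) (by linarith)
      linarith
    · have h1 := etaTerm_norm_le k hD0'
      rw [hterm k, Complex.norm_real, hDre] at h1
      exact (le_abs_self _).trans (by simpa using h1)
  have hpos : 0 < T := by
    refine Summable.tsum_pos hsumR (fun k => ?_) 0 ?_
    · have hk : (0:ℝ) ≤ (k:ℝ) := Nat.cast_nonneg k
      have := Real.rpow_le_rpow_of_nonpos (x := 2*(k:ℝ)+1) (y := 2*(k:ℝ)+2) (by linarith)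
        (by linarith) (z := -D) (by linarith)
      linarith
    · have h1 := Real.rpow_lt_rpow_of_neg (x := (1:ℝ)) (y := 2) one_pos one_lt_two
        (z := -D) (by linarith)
      rw [Real.one_rpow] at h1
      simp only [Nat.cast_zero, mul_zero, zero_add]
      norm_num
      exact h1
  have hc : (1 : ℝ) - (2:ℝ) ^ ((1:ℝ) - D) < 0 := by
    have : 1 < (2:ℝ) ^ ((1:ℝ) - D) :=
      (Real.one_lt_rpow_iff_of_pos (by norm_num)).2 (Or.inl ⟨one_lt_two, by linarith⟩)
    linarith
  have hcast : ((1 : ℂ) - (2:ℂ) ^ ((1:ℂ) - (D:ℂ))) = ((1 - (2:ℝ) ^ ((1:ℝ) - D) : ℝ) : ℂ) := by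
    rw [show ((1:ℂ) - (D:ℂ)) = ((1 - D : ℝ) : ℂ) by push_cast; ring,
      show (2:ℂ) = ((2:ℝ):ℂ) by norm_num,
      ← Complex.ofReal_cpow (by norm_num) (1 - D)]
    push_cast
    ring
  have hmain : ((1 - (2:ℝ) ^ ((1:ℝ) - D) : ℝ) : ℂ) * riemannZeta (D:ℂ) = (T:ℂ) := by
    rw [← hcast, hid, hFD]
  have hc0 : ((1 - (2:ℝ) ^ ((1:ℝ) - D) : ℝ) : ℂ) ≠ 0 :=
    Complex.ofReal_ne_zero.2 (ne_of_lt hc)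
  have hzeta : riemannZeta (D:ℂ) = ((T / (1 - (2:ℝ) ^ ((1:ℝ) - D)) : ℝ) : ℂ) := by
    rw [Complex.ofReal_div, eq_div_iff hc0, mul_comm]
    exact hmain
  rw [hzeta]
  refine ⟨Complex.ofReal_im _, ?_⟩
  rw [Complex.ofReal_re]
  exact div_neg_of_pos_of_neg hpos hc
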